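/- Let X1 be uniform on [1:N] with N ≥ 4 even; let Y be binary, related to the parity of X1 with P(Y ≠ parity(X1)) = p2. For any random variables X̂1 (over [1:N]) with P(X1 ≠ X̂1) ≤ D1 ≤ 1/2 and any Ŝ, it holds that I(X1; X̂1, Ŝ | Y) ≥ h_b(p2) + log(N/2) − h_b(D1) − D1 log(N − 1). -/
import Mathlib

open scoped BigOperators
set_option linter.unusedSectionVars false
set_option maxHeartbeats 1000000

/-- Binary entropy function (base-2 logs). -/
noncomputable def hb (q : ℝ) : ℝ := -(q * Real.logb 2 q) - (1 - q) * Real.logb 2 (1 - q)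

/-- Joint pmf of `(fA, fB, fC)` induced by a pmf `μ` on a finite sample space. -/
noncomputable def jointP {Ω α β γ : Type*} [Fintype Ω]
    [DecidableEq α] [DecidableEq β] [DecidableEq γ]
    (μ : Ω → ℝ) (fA : Ω → α) (fB : Ω → β) (fC : Ω → γ) (a : α) (b : β) (c : γ) : ℝ :=
  ∑ ω, if fA ω = a ∧ fB ω = b ∧ fC ω = c then μ ω else 0

/-- Conditional mutual information `I(A; B | C)` (base-2) of finite random variables. -/
noncomputable def cmi {Ω α β γ : Type*} [Fintype Ω] [Fintype α] [Fintype β] [Fintype γ]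
    [DecidableEq α] [DecidableEq β] [DecidableEq γ]
    (μ : Ω → ℝ) (fA : Ω → α) (fB : Ω → β) (fC : Ω → γ) : ℝ :=
  ∑ a, ∑ b, ∑ c,
    jointP μ fA fB fC a b c *
      Real.logb 2 (jointP μ fA fB fC a b c * (∑ a', ∑ b', jointP μ fA fB fC a' b' c) /
        ((∑ b', jointP μ fA fB fC a b' c) * (∑ a', jointP μ fA fB fC a' b c)))

section Helpers

lemma triple_ite_sum {α β γ : Type*} [Fintype α] [Fintype β] [Fintype γ]
    [DecidableEq α] [DecidableEq β] [DecidableEq γ]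
    (x : α) (y : β) (z : γ) (g : α → β → γ → ℝ) :
    ∑ a, ∑ b, ∑ c, (if x = a ∧ y = b ∧ z = c then g a b c else 0) = g x y z := by
  simp [ite_and, Finset.sum_ite_eq]

lemma single_ite_sum {β : Type*} [Fintype β] [DecidableEq β]
    (P Q : Prop) [Decidable P] [Decidable Q] (y : β) (m : ℝ) :
    ∑ b, (if P ∧ y = b ∧ Q then m else 0) = if P ∧ Q then m else 0 := by
  by_cases hP : P <;> by_cases hQ : Q <;> simp [hP, hQ, Finset.sum_ite_eq]

lemma quad_swap {Ω α β γ : Type*} [Fintype Ω] [Fintype α] [Fintype β] [Fintype γ]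
    (F : α → β → γ → Ω → ℝ) :
    (∑ a, ∑ b, ∑ c, ∑ ω, F a b c ω) = ∑ ω, ∑ a, ∑ b, ∑ c, F a b c ω := by
  calc (∑ a, ∑ b, ∑ c, ∑ ω, F a b c ω)
      = ∑ a, ∑ b, ∑ ω, ∑ c, F a b c ω :=
        Finset.sum_congr rfl fun a _ => Finset.sum_congr rfl fun b _ => Finset.sum_comm
    _ = ∑ a, ∑ ω, ∑ b, ∑ c, F a b c ω :=
        Finset.sum_congr rfl fun a _ => Finset.sum_comm
    _ = ∑ ω, ∑ a, ∑ b, ∑ c, F a b c ω := Finset.sum_comm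

variable {Ω α β γ : Type*} [Fintype Ω] [Fintype α] [Fintype β] [Fintype γ]
    [DecidableEq α] [DecidableEq β] [DecidableEq γ]
    (μ : Ω → ℝ) (fA : Ω → α) (fB : Ω → β) (fC : Ω → γ)

lemma jointP_nonneg (h : ∀ ω, 0 ≤ μ ω) (a : α) (b : β) (c : γ) :
    0 ≤ jointP μ fA fB fC a b c := by
  unfold jointP
  exact Finset.sum_nonneg fun ω _ => by split <;> simp [h ω]

lemma sum_b_jointP (a : α) (c : γ) :
    ∑ b, jointP μ fA fB fC a b c = ∑ ω, if fA ω = a ∧ fC ω = c then μ ω else 0 := by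
  unfold jointP
  rw [Finset.sum_comm]
  exact Finset.sum_congr rfl fun ω _ => single_ite_sum _ _ _ _

lemma sum_weighted_jointP (φ : α → β → γ → Prop) [∀ a b c, Decidable (φ a b c)] :
    ∑ a, ∑ b, ∑ c, (if φ a b c then jointP μ fA fB fC a b c else 0)
      = ∑ ω, if φ (fA ω) (fB ω) (fC ω) then μ ω else 0 := by
  unfold jointP
  have h1 : ∀ a b c, (if φ a b c then ∑ ω, if fA ω = a ∧ fB ω = b ∧ fC ω = c then μ ω else 0 else 0)
      = ∑ ω, if fA ω = a ∧ fB ω = b ∧ fC ω = c then (if φ a b c then μ ω else 0) else 0 := by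
    intro a b c
    by_cases hφ : φ a b c <;> simp [hφ]
  simp_rw [h1]
  rw [quad_swap]
  exact Finset.sum_congr rfl fun ω _ =>
    triple_ite_sum (fA ω) (fB ω) (fC ω) (fun a b c => if φ a b c then μ ω else 0)

lemma triple_swap_a {A B C : Type*} [Fintype A] [Fintype B] [Fintype C]
    (F : A → B → C → ℝ) :
    ∑ a, ∑ b, ∑ c, F a b c = ∑ b, ∑ c, ∑ a, F a b c := by
  calc ∑ a, ∑ b, ∑ c, F a b c = ∑ b, ∑ a, ∑ c, F a b c := Finset.sum_comm
    _ = ∑ b, ∑ c, ∑ a, F a b c := Finset.sum_congr rfl fun b _ => Finset.sum_comm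

lemma le_sum_triple {A B C : Type*} [Fintype A] [Fintype B] [Fintype C]
    (w : A → B → C → ℝ) (hw : ∀ x y z, 0 ≤ w x y z) (a : A) (b : B) (c : C) :
    w a b c ≤ ∑ x, ∑ y, ∑ z, w x y z := by
  calc w a b c ≤ ∑ z, w a b z :=
        Finset.single_le_sum (fun z _ => hw a b z) (Finset.mem_univ c)
    _ ≤ ∑ y, ∑ z, w a y z :=
        Finset.single_le_sum (fun y _ => Finset.sum_nonneg fun z _ => hw a y z) (Finset.mem_univ b)
    _ ≤ ∑ x, ∑ y, ∑ z, w x y z :=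
        Finset.single_le_sum
          (fun x _ => Finset.sum_nonneg fun y _ => Finset.sum_nonneg fun z _ => hw x y z)
          (Finset.mem_univ a)

lemma gibbs_ineq {A B C : Type*} [Fintype A] [Fintype B] [Fintype C]
    (p q : A → B → C → ℝ) (hp : ∀ a b c, 0 ≤ p a b c) (hq : ∀ a b c, 0 ≤ q a b c)
    (hq1 : ∀ b c, ∑ a, q a b c ≤ 1)
    (hpos : ∀ a b c, 0 < p a b c → 0 < q a b c) :
    ∑ a, ∑ b, ∑ c, p a b c * Real.logb 2 (q a b c)
      ≤ ∑ a, ∑ b, ∑ c, p a b c * Real.logb 2 (p a b c / ∑ a', p a' b c) := by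
  have hP : ∀ b c, 0 ≤ ∑ a', p a' b c := fun b c => Finset.sum_nonneg fun a _ => hp a b c
  have hlog2 : (0:ℝ) < Real.log 2 := Real.log_pos one_lt_two
  have key : ∀ a b c, p a b c * Real.logb 2 (q a b c)
      - p a b c * Real.logb 2 (p a b c / ∑ a', p a' b c)
      ≤ (q a b c * (∑ a', p a' b c) - p a b c) / Real.log 2 := by
    intro a b c
    rcases (hp a b c).eq_or_lt with h0 | h0
    · rw [← h0]
      simp only [zero_mul, sub_zero, zero_sub, neg_zero]
      have h1 := hq a b c
      have h2 := hP b c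
      positivity
    · have hqp := hpos a b c h0
      have hPp : 0 < ∑ a', p a' b c :=
        lt_of_lt_of_le h0 (Finset.single_le_sum (fun a' _ => hp a' b c) (Finset.mem_univ a))
      have hx : 0 < q a b c * (∑ a', p a' b c) / p a b c := by positivity
      have hsplit : Real.logb 2 (q a b c) - Real.logb 2 (p a b c / ∑ a', p a' b c)
          = Real.logb 2 (q a b c * (∑ a', p a' b c) / p a b c) := by
        rw [Real.logb_div (ne_of_gt h0) (ne_of_gt hPp),
            Real.logb_div (ne_of_gt (by positivity : (0:ℝ) < q a b c * _)) (ne_of_gt h0),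
            Real.logb_mul (ne_of_gt hqp) (ne_of_gt hPp)]
        ring
      rw [← mul_sub, hsplit, Real.logb]
      have hlb := Real.log_le_sub_one_of_pos hx
      have hnum : p a b c * Real.log (q a b c * (∑ a', p a' b c) / p a b c)
          ≤ q a b c * (∑ a', p a' b c) - p a b c := by
        have h2 := mul_le_mul_of_nonneg_left hlb h0.le
        have h3 : p a b c * (q a b c * (∑ a', p a' b c) / p a b c - 1)
            = q a b c * (∑ a', p a' b c) - p a b c := by
          field_simp
        linarith
      rw [mul_div_assoc']
      gcongr
  have hbound : ∑ a, ∑ b, ∑ c, ((q a b c * (∑ a', p a' b c) - p a b c) / Real.log 2) ≤ 0 := by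
    rw [triple_swap_a]
    apply Finset.sum_nonpos
    intro b _
    apply Finset.sum_nonpos
    intro c _
    have heq : ∑ a, (q a b c * (∑ a', p a' b c) - p a b c) / Real.log 2
        = ((∑ a, q a b c) * (∑ a', p a' b c) - ∑ a, p a b c) / Real.log 2 := by
      rw [← Finset.sum_div, Finset.sum_sub_distrib, ← Finset.sum_mul]
    rw [heq]
    apply div_nonpos_of_nonpos_of_nonneg _ hlog2.le
    have := mul_le_mul_of_nonneg_right (hq1 b c) (hP b c)
    linarith [this]
  have hsum : ∑ a, ∑ b, ∑ c, (p a b c * Real.logb 2 (q a b c)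
      - p a b c * Real.logb 2 (p a b c / ∑ a', p a' b c))
      ≤ ∑ a, ∑ b, ∑ c, ((q a b c * (∑ a', p a' b c) - p a b c) / Real.log 2) :=
    Finset.sum_le_sum fun a _ => Finset.sum_le_sum fun b _ => Finset.sum_le_sum fun c _ => key a b c
  simp only [Finset.sum_sub_distrib] at hsum
  linarith

lemma sum_mid_factor {A B C : Type*} [Fintype A] [Fintype B] [Fintype C]
    (J : A → B → C → ℝ) (L : A → C → ℝ) :
    ∑ a, ∑ b, ∑ c, J a b c * L a c = ∑ a, ∑ c, (∑ b, J a b c) * L a c := by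
  refine Finset.sum_congr rfl fun a _ => ?_
  rw [Finset.sum_comm]
  exact Finset.sum_congr rfl fun c _ => (Finset.sum_mul _ _ _).symm

lemma hb_qary (n : ℕ) (t : ℝ) :
    hb t + t * Real.logb 2 ((n:ℝ) - 1) = Real.qaryEntropy n t / Real.log 2 := by
  have h : ((((n:ℤ) - 1) : ℤ) : ℝ) = (n:ℝ) - 1 := by push_cast; ring
  simp only [hb, Real.qaryEntropy, Real.binEntropy, Real.logb, Real.log_inv, h]
  have hlog2 : Real.log 2 ≠ 0 := ne_of_gt (Real.log_pos one_lt_two)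
  field_simp
  ring

lemma hb_mono (n : ℕ) (hn : 4 ≤ n) {x y : ℝ} (hx : 0 ≤ x) (hxy : x ≤ y) (hy : y ≤ 1/2) :
    hb x + x * Real.logb 2 ((n:ℝ) - 1) ≤ hb y + y * Real.logb 2 ((n:ℝ) - 1) := by
  rw [hb_qary, hb_qary]
  have hlog2 : (0:ℝ) < Real.log 2 := Real.log_pos one_lt_two
  have hmem1 : x ∈ Set.Icc (0:ℝ) (1 - 1/(n:ℝ)) := by
    constructor
    · exact hx
    · have : (4:ℝ) ≤ (n:ℝ) := by exact_mod_cast hn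
      have h1 : 1/(n:ℝ) ≤ 1/4 := by
        apply one_div_le_one_div_of_le <;> linarith
      linarith
  have hmem2 : y ∈ Set.Icc (0:ℝ) (1 - 1/(n:ℝ)) := by
    constructor
    · linarith
    · have : (4:ℝ) ≤ (n:ℝ) := by exact_mod_cast hn
      have h1 : 1/(n:ℝ) ≤ 1/4 := by
        apply one_div_le_one_div_of_le <;> linarith
      linarith
  have hmono := (Real.qaryEntropy_strictMonoOn (q := n) (by omega)).monotoneOn hmem1 hmem2 hxy
  gcongr

lemma parity_sum (u v : ℝ) (k : ℕ) :
    ∑ i ∈ Finset.range (2*k), (if Even (i+1) then u else v) = k*(u+v) := by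
  induction k with
  | zero => simp
  | succ k ih =>
    have h2 : 2*(k+1) = (2*k+1)+1 := by ring
    rw [h2, Finset.sum_range_succ, Finset.sum_range_succ, ih]
    have he : Even (2*k+1+1) := ⟨k+1, by ring⟩
    have ho : ¬ Even (2*k+1) := by simp [Nat.even_add_one, parity_simps]
    rw [if_pos he, if_neg ho]
    push_cast
    ring

lemma fin2cases (y : Fin 2) : y = 0 ∨ y = 1 := by omega

end Helpers

/-- for `X1` uniform on `[1:N]` (`N ≥ 4` even), binary `Y` related to
the parity of `X1` with crossover `p2`, and any `X̂1, Ŝ` with `P(X1 ≠ X̂1) ≤ D1 ≤ 1/2`,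
`I(X1; X̂1, Ŝ | Y) ≥ h_b(p2) + log(N/2) − h_b(D1) − D1·log(N − 1)`.
Here `x : Fin N` encodes the integer `x.val + 1 ∈ [1:N]`. -/
theorem integer_classification_converse
    {Ω T : Type*} [Fintype Ω] [Fintype T] [DecidableEq T]
    (N : ℕ) (hN : 4 ≤ N) (hNeven : Even N)
    (μ : Ω → ℝ) (hμ0 : ∀ ω, 0 ≤ μ ω) (hμ1 : ∑ ω, μ ω = 1)
    (X1 : Ω → Fin N) (Y : Ω → Fin 2) (X1h : Ω → Fin N) (Sh : Ω → T)
    (p2 D1 : ℝ) (hp20 : 0 ≤ p2) (hp21 : p2 ≤ 1/2) (hD10 : 0 ≤ D1) (hD11 : D1 ≤ 1/2)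
    -- X1 is uniform on [1:N]
    (hunif : ∀ x : Fin N, (∑ ω, if X1 ω = x then μ ω else 0) = 1 / N)
    -- P(X1 = x, Y = 0) = (1/N)·(1 − p2) if x is even, (1/N)·p2 if x is odd
    (hXY : ∀ x : Fin N, (∑ ω, if X1 ω = x ∧ Y ω = 0 then μ ω else 0) =
      (1 / N) * (if Even (x.val + 1) then 1 - p2 else p2))
    -- distortion constraint
    (hdist : (∑ ω, if X1 ω ≠ X1h ω then μ ω else 0) ≤ D1) :
    cmi μ X1 (fun ω => (X1h ω, Sh ω)) Y ≥
      hb p2 + Real.logb 2 ((N : ℝ) / 2) - hb D1 - D1 * Real.logb 2 ((N : ℝ) - 1) := by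
  classical
  have hNR : (4:ℝ) ≤ (N:ℝ) := by exact_mod_cast hN
  have hN0 : (N:ℝ) ≠ 0 := by linarith
  have hN1 : (0:ℝ) < (N:ℝ) - 1 := by linarith
  set B : Ω → Fin N × T := fun ω => (X1h ω, Sh ω) with hB
  set J : Fin N → Fin N × T → Fin 2 → ℝ := jointP μ X1 B Y with hJ
  have hp0 : ∀ a b c, 0 ≤ J a b c := fun a b c => jointP_nonneg μ X1 B Y hμ0 a b c
  -- total probability
  have htot : ∑ a, ∑ b, ∑ c, J a b c = 1 := by
    have h := sum_weighted_jointP μ X1 B Y (fun _ _ _ => True)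
    simpa [hμ1] using h
  -- probability of error
  set Pe : ℝ := ∑ ω, if X1 ω ≠ X1h ω then μ ω else 0 with hPedef
  have hPe0 : 0 ≤ Pe := Finset.sum_nonneg fun ω _ => by split <;> simp [hμ0 ω]
  have hPeD : Pe ≤ D1 := hdist
  have hne : ∑ a, ∑ b, ∑ c, (if a ≠ b.1 then J a b c else 0) = Pe := by
    have h := sum_weighted_jointP μ X1 B Y (fun a b c => a ≠ b.1)
    rw [hJ, h, hPedef]
  have heqd : ∑ a, ∑ b, ∑ c, (if a = b.1 then J a b c else 0) = 1 - Pe := by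
    have hsub : ∀ (a : Fin N) (b : Fin N × T) (c : Fin 2),
        (if a = b.1 then J a b c else 0) = J a b c - (if a ≠ b.1 then J a b c else 0) := by
      intro a b c
      by_cases h : a = b.1 <;> simp [h]
    simp_rw [hsub, Finset.sum_sub_distrib]
    rw [htot, hne]
  -- marginals of (X1, Y)
  have hm0 : ∀ a : Fin N, (∑ b, J a b 0)
      = 1/(N:ℝ) * (if Even (a.val + 1) then 1 - p2 else p2) := by
    intro a
    rw [hJ, sum_b_jointP]
    exact hXY a
  have hmsum : ∀ a : Fin N, (∑ b, J a b 0) + (∑ b, J a b 1) = 1/(N:ℝ) := by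
    intro a
    rw [hJ, sum_b_jointP, sum_b_jointP, ← Finset.sum_add_distrib]
    rw [← hunif a]
    refine Finset.sum_congr rfl fun ω _ => ?_
    by_cases hX : X1 ω = a
    · rcases fin2cases (Y ω) with h | h <;> simp [hX, h]
    · simp [hX]
  -- marginal of Y
  have hcount : ∑ a : Fin N, (if Even (a.val + 1) then 1 - p2 else p2) = (N:ℝ)/2 := by
    obtain ⟨k, hk⟩ := hNeven
    have hk2 : N = 2 * k := by omega
    rw [Fin.sum_univ_eq_sum_range (fun i => if Even (i + 1) then 1 - p2 else p2) N]
    rw [hk2, parity_sum]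
    have : ((2 * k : ℕ) : ℝ) = 2 * (k:ℝ) := by push_cast; ring
    rw [this]
    ring
  have hPC0 : ∑ a, ∑ b, J a b 0 = 1/2 := by
    simp_rw [hm0]
    rw [← Finset.mul_sum, hcount]
    field_simp
  have hPC1 : ∑ a, ∑ b, J a b 1 = 1/2 := by
    have h1 : ∑ a : Fin N, ((∑ b, J a b 0) + (∑ b, J a b 1)) = 1 := by
      simp_rw [hmsum]
      rw [Finset.sum_const, Finset.card_univ, Fintype.card_fin, nsmul_eq_mul]
      field_simp
    rw [Finset.sum_add_distrib, hPC0] at h1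
    linarith
  -- split cmi into T1 - T2
  have key1 : ∀ (a : Fin N) (b : Fin N × T) (c : Fin 2),
      J a b c * Real.logb 2 (J a b c * (∑ a', ∑ b', J a' b' c) /
          ((∑ b', J a b' c) * (∑ a', J a' b c)))
      = J a b c * Real.logb 2 (J a b c / (∑ a', J a' b c))
        - J a b c * Real.logb 2 ((∑ b', J a b' c) / (∑ a', ∑ b', J a' b' c)) := by
    intro a b c
    rcases (hp0 a b c).eq_or_lt with h0 | h0
    · rw [← h0]; ring
    · have hPA : 0 < ∑ b', J a b' c :=
        lt_of_lt_of_le h0 (Finset.single_le_sum (fun b' _ => hp0 a b' c) (Finset.mem_univ b))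
      have hPB : 0 < ∑ a', J a' b c :=
        lt_of_lt_of_le h0 (Finset.single_le_sum (fun a' _ => hp0 a' b c) (Finset.mem_univ a))
      have hPC : 0 < ∑ a', ∑ b', J a' b' c :=
        lt_of_lt_of_le hPA (Finset.single_le_sum
          (fun a' _ => Finset.sum_nonneg fun b' _ => hp0 a' b' c) (Finset.mem_univ a))
      rw [Real.logb_div (by positivity) (by positivity),
          Real.logb_mul (ne_of_gt h0) (ne_of_gt hPC),
          Real.logb_mul (ne_of_gt hPA) (ne_of_gt hPB),
          Real.logb_div (ne_of_gt h0) (ne_of_gt hPB),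
          Real.logb_div (ne_of_gt hPA) (ne_of_gt hPC)]
      ring
  have hcmi : cmi μ X1 B Y
      = (∑ a, ∑ b, ∑ c, J a b c * Real.logb 2 (J a b c / (∑ a', J a' b c)))
        - (∑ a, ∑ b, ∑ c, J a b c * Real.logb 2 ((∑ b', J a b' c) / (∑ a', ∑ b', J a' b' c))) := by
    unfold cmi
    rw [← hJ]
    simp_rw [key1]
    simp only [Finset.sum_sub_distrib]
  -- compute T2
  have hT2 : (∑ a, ∑ b, ∑ c, J a b c * Real.logb 2 ((∑ b', J a b' c) / (∑ a', ∑ b', J a' b' c)))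
      = -(hb p2 + Real.logb 2 ((N:ℝ)/2)) := by
    rw [sum_mid_factor J (fun a c => Real.logb 2 ((∑ b', J a b' c) / (∑ a', ∑ b', J a' b' c)))]
    simp only [Fin.sum_univ_two (f := fun c => _), hPC0, hPC1]
    have harg : ∀ x : ℝ, (1/(N:ℝ) * x)/(1/2 : ℝ) = x/((N:ℝ)/2) := by
      intro x; field_simp
    have hm1 : ∀ a : Fin N, (∑ b, J a b 1)
        = 1/(N:ℝ) * (if Even (a.val + 1) then p2 else 1 - p2) := by
      intro a
      have h := hmsum a
      rw [hm0 a] at h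
      by_cases hpar : Even (a.val + 1) <;> simp only [hpar, if_true, if_false] at h ⊢ <;> linear_combination h
    have hterm : ∀ a : Fin N,
        (∑ b, J a b 0) * Real.logb 2 ((∑ b, J a b 0) / (1/2 : ℝ))
          + (∑ b, J a b 1) * Real.logb 2 ((∑ b, J a b 1) / (1/2 : ℝ))
        = 1/(N:ℝ) * ((1-p2) * Real.logb 2 ((1-p2)/((N:ℝ)/2))
            + p2 * Real.logb 2 (p2/((N:ℝ)/2))) := by
      intro a
      rw [hm0 a, hm1 a]
      by_cases hpar : Even (a.val + 1) <;>
        simp only [hpar, if_true, if_false] <;> rw [harg, harg] <;> ring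
    simp_rw [hterm]
    rw [Finset.sum_const, Finset.card_univ, Fintype.card_fin, nsmul_eq_mul]
    have hcollapse : (N:ℝ) * (1/(N:ℝ) * ((1-p2) * Real.logb 2 ((1-p2)/((N:ℝ)/2))
        + p2 * Real.logb 2 (p2/((N:ℝ)/2))))
        = (1-p2) * Real.logb 2 ((1-p2)/((N:ℝ)/2)) + p2 * Real.logb 2 (p2/((N:ℝ)/2)) := by
      field_simp
    rw [hcollapse]
    have hN2 : (0:ℝ) < (N:ℝ)/2 := by linarith
    have h1p : (0:ℝ) < 1 - p2 := by linarith
    rw [Real.logb_div (ne_of_gt h1p) (ne_of_gt hN2)]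
    rcases hp20.eq_or_lt with h | h
    · rw [← h]; simp [hb]
    · rw [Real.logb_div (ne_of_gt h) (ne_of_gt hN2)]; simp only [hb]; ring
  -- bound T1
  have hT1 : (∑ a, ∑ b, ∑ c, J a b c * Real.logb 2 (J a b c / (∑ a', J a' b c)))
      ≥ -(hb Pe + Pe * Real.logb 2 ((N:ℝ) - 1)) := by
    set q : Fin N → Fin N × T → Fin 2 → ℝ :=
      fun a b _ => if a = b.1 then 1 - Pe else Pe/((N:ℝ)-1) with hq
    have hq0 : ∀ (a : Fin N) (b : Fin N × T) (c : Fin 2), 0 ≤ q a b c := by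
      intro a b c
      simp only [hq]
      split
      · linarith
      · positivity
    have hq1 : ∀ (b : Fin N × T) (c : Fin 2), ∑ a, q a b c ≤ 1 := by
      intro b c
      have hsplit : ∀ a : Fin N, q a b c
          = Pe/((N:ℝ)-1) + (if a = b.1 then (1 - Pe) - Pe/((N:ℝ)-1) else 0) := by
        intro a
        simp only [hq]
        split <;> ring
      simp_rw [hsplit]
      rw [Finset.sum_add_distrib, Finset.sum_const, Finset.card_univ, Fintype.card_fin,
        nsmul_eq_mul, Finset.sum_ite_eq' Finset.univ b.1 (fun _ => (1-Pe) - Pe/((N:ℝ)-1))]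
      simp only [Finset.mem_univ, if_true]
      have hone : (N:ℝ) * (Pe/((N:ℝ)-1)) + ((1-Pe) - Pe/((N:ℝ)-1)) = 1 := by
        field_simp
        ring
      linarith
    have hqpos : ∀ (a : Fin N) (b : Fin N × T) (c : Fin 2), 0 < J a b c → 0 < q a b c := by
      intro a b c h
      simp only [hq]
      split_ifs with hab
      · linarith
      · have hle : J a b c ≤ Pe := by
          rw [← hne]
          have h2 := le_sum_triple (fun x y z => if x ≠ y.1 then J x y z else 0)
            (fun x y z => by by_cases hw : x = y.1 <;> simp [hw, hp0 x y z]) a b c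
          simpa [hab] using h2
        exact div_pos (lt_of_lt_of_le h hle) hN1
    have hgibbs := gibbs_ineq J q hp0 hq0 hq1 hqpos
    have hlhs : ∑ a, ∑ b, ∑ c, J a b c * Real.logb 2 (q a b c)
        = (1-Pe) * Real.logb 2 (1-Pe) + Pe * Real.logb 2 (Pe/((N:ℝ)-1)) := by
      have hsplit : ∀ (a : Fin N) (b : Fin N × T) (c : Fin 2),
          J a b c * Real.logb 2 (q a b c)
          = (if a = b.1 then J a b c else 0) * Real.logb 2 (1-Pe)
            + (if a ≠ b.1 then J a b c else 0) * Real.logb 2 (Pe/((N:ℝ)-1)) := by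
        intro a b c
        simp only [hq]
        by_cases h : a = b.1 <;> simp [h]
      simp_rw [hsplit, Finset.sum_add_distrib, ← Finset.sum_mul]
      rw [heqd, hne]
    have hval : (1-Pe) * Real.logb 2 (1-Pe) + Pe * Real.logb 2 (Pe/((N:ℝ)-1))
        = -(hb Pe + Pe * Real.logb 2 ((N:ℝ)-1)) := by
      rcases hPe0.eq_or_lt with h | h
      · rw [← h]; simp [hb]
      · rw [Real.logb_div (ne_of_gt h) (ne_of_gt hN1)]; simp only [hb]; ring
    rw [ge_iff_le, ← hval, ← hlhs]
    exact hgibbs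
  have hmono : hb Pe + Pe * Real.logb 2 ((N:ℝ) - 1)
      ≤ hb D1 + D1 * Real.logb 2 ((N:ℝ) - 1) := hb_mono N hN hPe0 hPeD hD11
  rw [hcmi, hT2]
  linarith
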